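/- arXiv:1810.03497 — 7 statements merged into one kernel-verified Lean document; each statement's English description precedes it below -/
import Mathlib

section
/- Let ζ ∈ ℂ with |ζ| ≥ 1, ζ ≠ 0. If ψ ∈ ℓ²(ℕ₀; ℂ²) satisfies ψ_{n−1}^B + conj(ζ) ψ_n^B = 0 and ψ_{n+1}^A + ζ ψ_n^A = 0 for all n ≥ 0 (with ψ_{−1}^B = 0), then ψ = 0. That is, 0 is not an eigenvalue of the tight-binding zigzag edge Hamiltonian when |ζ| ≥ 1. -/
theorem stmt_3 (ζ : ℂ) (hζ0 : ζ ≠ 0) (hζ : 1 ≤ ‖ζ‖)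
    (ψA ψB : ℕ → ℂ)
    (hl2 : Summable fun n => ‖ψA n‖ ^ 2 + ‖ψB n‖ ^ 2)
    (heqA : ∀ n : ℕ, (if n = 0 then 0 else ψB (n - 1)) + (starRingEnd ℂ) ζ * ψB n = 0)
    (heqB : ∀ n : ℕ, ψA (n + 1) + ζ * ψA n = 0) :
    ∀ n, ψA n = 0 ∧ ψB n = 0 := by
  have hzc : (starRingEnd ℂ) ζ ≠ 0 := by simpa using hζ0
  have hB : ∀ n, ψB n = 0 := by
    intro n
    induction n with
    | zero =>
      have h := heqA 0
      simp at h
      rcases h with h | h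
      · exact absurd h hζ0
      · exact h
    | succ k ih =>
      have h := heqA (k + 1)
      simp [ih] at h
      rcases h with h | h
      · exact absurd h hζ0
      · exact h
  -- bound: |ψA 0| ≤ |ψA n|
  have hAb : ∀ n, ‖ψA 0‖ ≤ ‖ψA n‖ := by
    intro n
    induction n with
    | zero => exact le_refl _
    | succ k ih =>
      have h : ψA (k + 1) = -(ζ * ψA k) := by
        have := heqB k; linear_combination this
      rw [h]
      rw [norm_neg, norm_mul]
      calc ‖ψA 0‖ ≤ ‖ψA k‖ := ih
        _ = 1 * ‖ψA k‖ := by ring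
        _ ≤ ‖ζ‖ * ‖ψA k‖ :=
            mul_le_mul_of_nonneg_right hζ (by positivity)
  have hA0 : ψA 0 = 0 := by
    have ht : Filter.Tendsto (fun n => ‖ψA n‖ ^ 2 + ‖ψB n‖ ^ 2)
        Filter.atTop (nhds 0) := hl2.tendsto_atTop_zero
    have ht' : Filter.Tendsto (fun n => ‖ψA n‖ ^ 2) Filter.atTop (nhds 0) := by
      have : (fun n => ‖ψA n‖ ^ 2) =
          fun n => ‖ψA n‖ ^ 2 + ‖ψB n‖ ^ 2 := by
        funext n; simp [hB n]
      rw [this]; exact ht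
    have hle : ‖ψA 0‖ ^ 2 ≤ 0 := by
      refine ge_of_tendsto ht' ?_
      filter_upwards with n
      exact pow_le_pow_left₀ (norm_nonneg _) (hAb n) 2
    have : ‖ψA 0‖ = 0 := by nlinarith [norm_nonneg (ψA 0)]
    exact norm_eq_zero.mp this
  have hA : ∀ n, ψA n = 0 := by
    intro n
    induction n with
    | zero => exact hA0
    | succ k ih =>
      have := heqB k
      simpa [ih] using this
  exact fun n => ⟨hA n, hB n⟩
end

section
/- Let ζ ∈ ℂ with ζ ≠ 0, and let z ∈ ℝ with |z| < |1 − |ζ|| (and |ζ| ≠ 1). Let λ₁ = [−(1+|ζ|²−z²) + sqrt((1+|ζ|²−z²)² − 4|ζ|²)]/(2 conj(ζ)) and λ₂ = [−(1+|ζ|²−z²) − sqrt((1+|ζ|²−z²)² − 4|ζ|²)]/(2 conj(ζ)). Then |λ₁| < 1 < |λ₂|. -/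
theorem stmt_6 (ζ : ℂ) (z : ℝ) (hζ0 : ζ ≠ 0) (hζ1 : ‖ζ‖ ≠ 1)
    (hz : |z| < |1 - ‖ζ‖|) :
    ‖(((-(1 + ‖ζ‖ ^ 2 - z ^ 2) +
        Real.sqrt ((1 + ‖ζ‖ ^ 2 - z ^ 2) ^ 2 - 4 * ‖ζ‖ ^ 2) : ℝ) : ℂ) /
        (2 * (starRingEnd ℂ) ζ))‖ < 1 ∧
    1 < ‖(((-(1 + ‖ζ‖ ^ 2 - z ^ 2) -
        Real.sqrt ((1 + ‖ζ‖ ^ 2 - z ^ 2) ^ 2 - 4 * ‖ζ‖ ^ 2) : ℝ) : ℂ) /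
        (2 * (starRingEnd ℂ) ζ))‖ := by
  set r := ‖ζ‖ with hr_def
  have hr : 0 < r := norm_pos_iff.mpr hζ0
  have hz2 : z ^ 2 < (1 - r) ^ 2 := by
    have h := pow_lt_pow_left₀ hz (abs_nonneg z) (by norm_num : (2:ℕ) ≠ 0)
    rwa [sq_abs, sq_abs] at h
  set S := 1 + r ^ 2 - z ^ 2 with hS_def
  have h2r : 2 * r < S := by nlinarith
  have hS : 0 < S := by nlinarith
  have hD : 0 < S ^ 2 - 4 * r ^ 2 := by nlinarith
  set sd := Real.sqrt (S ^ 2 - 4 * r ^ 2) with hsd_def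
  have hsd0 : 0 ≤ sd := Real.sqrt_nonneg _
  have hsd2 : sd ^ 2 = S ^ 2 - 4 * r ^ 2 := Real.sq_sqrt hD.le
  have hsdS : sd < S := by nlinarith
  have habs : ‖(2 * (starRingEnd ℂ) ζ)‖ = 2 * r := by
    rw [norm_mul, Complex.norm_conj]; simp [hr_def]
  have key : ∀ x : ℝ, ‖((x : ℂ) / (2 * (starRingEnd ℂ) ζ))‖ = |x| / (2 * r) := by
    intro x
    rw [norm_div, habs, Complex.norm_real, Real.norm_eq_abs]
  constructor
  · rw [key]
    rw [div_lt_one (by positivity)]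
    rw [abs_of_nonpos (by nlinarith)]
    nlinarith
  · rw [key]
    rw [lt_div_iff₀ (by positivity)]
    rw [abs_of_nonpos (by nlinarith)]
    nlinarith
end

section
/- Let ζ ∈ ℂ with ζ ≠ 0, |ζ| ≠ 1, and let z ∈ ℝ with |z| > 1 + |ζ|. Then 1 + |ζ|² − z² < −2|ζ| < 0, the discriminant (1 + |ζ|² − z²)² − 4|ζ|² is strictly positive, and for λ₁, λ₂ as defined by the quadratic formula with the + and − branches of the real square root respectively, one has |λ₂| < 1 < |λ₁|. -/
theorem stmt_7 (ζ : ℂ) (z : ℝ) (hζ0 : ζ ≠ 0) (hζ1 : ‖ζ‖ ≠ 1)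
    (hz : 1 + ‖ζ‖ < |z|) :
    (1 + ‖ζ‖ ^ 2 - z ^ 2 < -(2 * ‖ζ‖)) ∧
    (-(2 * ‖ζ‖) < 0) ∧
    (0 < (1 + ‖ζ‖ ^ 2 - z ^ 2) ^ 2 - 4 * ‖ζ‖ ^ 2) ∧
    ‖(((-(1 + ‖ζ‖ ^ 2 - z ^ 2) -
        Real.sqrt ((1 + ‖ζ‖ ^ 2 - z ^ 2) ^ 2 - 4 * ‖ζ‖ ^ 2) : ℝ) : ℂ) /
        (2 * (starRingEnd ℂ) ζ))‖ < 1 ∧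
    1 < ‖(((-(1 + ‖ζ‖ ^ 2 - z ^ 2) +
        Real.sqrt ((1 + ‖ζ‖ ^ 2 - z ^ 2) ^ 2 - 4 * ‖ζ‖ ^ 2) : ℝ) : ℂ) /
        (2 * (starRingEnd ℂ) ζ))‖ := by
  set r : ℝ := ‖ζ‖ with hr_def
  have hr : 0 < r := norm_pos_iff.mpr hζ0
  have hzsq : (1 + r) ^ 2 < z ^ 2 := by
    have h0 : (0:ℝ) < 1 + r := by linarith
    nlinarith [sq_abs z, abs_nonneg z]
  set a : ℝ := 1 + r ^ 2 - z ^ 2 with ha_def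
  have h1 : a < -(2 * r) := by nlinarith
  have h2 : -(2 * r) < 0 := by linarith
  have hdisc : 0 < a ^ 2 - 4 * r ^ 2 := by nlinarith
  set s : ℝ := Real.sqrt (a ^ 2 - 4 * r ^ 2) with hs_def
  have hs0 : 0 ≤ s := Real.sqrt_nonneg _
  have hs2 : s ^ 2 = a ^ 2 - 4 * r ^ 2 := Real.sq_sqrt hdisc.le
  have hslt : s < -a := by nlinarith
  have habs2 : ‖(2 * (starRingEnd ℂ) ζ)‖ = 2 * r := by
    rw [norm_mul, Complex.norm_conj, Complex.norm_two, hr_def]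
  have h2r : (0:ℝ) < 2 * r := by linarith
  refine ⟨h1, h2, hdisc, ?_, ?_⟩
  · rw [norm_div, habs2, Complex.norm_real, Real.norm_eq_abs, div_lt_one h2r,
      abs_of_pos (by linarith : (0:ℝ) < -a - s)]
    nlinarith [sq_nonneg (s - (-a - 2 * r))]
  · rw [norm_div, habs2, Complex.norm_real, Real.norm_eq_abs, lt_div_iff₀ h2r, one_mul,
      abs_of_pos (by linarith : (0:ℝ) < -a + s)]
    linarith
end

section
/- Let ζ ∈ ℂ with ζ ≠ 0 and let z ∈ ℝ with ||ζ| − 1| ≤ |z| ≤ |ζ| + 1. Then every root λ of the quadratic equation conj(ζ) λ² + (1 + |ζ|² − z²) λ + ζ = 0 satisfies |λ| = 1. -/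
theorem stmt_8 (ζ : ℂ) (z : ℝ) (hζ : ζ ≠ 0)
    (h1 : |‖ζ‖ - 1| ≤ |z|) (h2 : |z| ≤ ‖ζ‖ + 1) :
    ∀ lam : ℂ,
      (starRingEnd ℂ) ζ * lam ^ 2 + ((1 + ‖ζ‖ ^ 2 - z ^ 2 : ℝ) : ℂ) * lam + ζ = 0 →
      ‖lam‖ = 1 := by
  intro lam heq
  set r : ℝ := ‖ζ‖ with hr
  set b : ℝ := 1 + r ^ 2 - z ^ 2 with hb
  have hrpos : 0 < r := norm_pos_iff.mpr hζ
  have hz1 : (r - 1) ^ 2 ≤ z ^ 2 := by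
    have h' : |r - 1| ^ 2 ≤ |z| ^ 2 := pow_le_pow_left₀ (abs_nonneg _) h1 2
    simpa [sq_abs] using h'
  have hz2 : z ^ 2 ≤ (r + 1) ^ 2 := by
    have h' : |z| ^ 2 ≤ (r + 1) ^ 2 :=
      pow_le_pow_left₀ (abs_nonneg _) h2 2
    simpa [sq_abs] using h'
  have hdisc : b ^ 2 ≤ 4 * r ^ 2 := by nlinarith
  set μ : ℂ := (starRingEnd ℂ) ζ * lam with hμ
  have hcz : (starRingEnd ℂ) ζ * ζ = ((r : ℂ)) ^ 2 := by
    rw [hr, mul_comm, Complex.mul_conj']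
  have heq2 : μ * μ + ((b : ℝ) : ℂ) * μ + ((r : ℂ)) ^ 2 = 0 := by
    have := congrArg (fun w => (starRingEnd ℂ) ζ * w) heq
    simp only [mul_zero] at this
    rw [← this, hμ, ← hcz]
    ring
  set x : ℝ := μ.re with hx
  set y : ℝ := μ.im with hy
  have hre : x * x - y * y + b * x + r ^ 2 = 0 := by
    have := congrArg Complex.re heq2
    simpa [Complex.add_re, Complex.mul_re, Complex.ofReal_re, Complex.ofReal_im, pow_two]
      using this
  have him : x * y + y * x + b * y = 0 := by
    have := congrArg Complex.im heq2
    simpa [Complex.add_im, Complex.mul_im, Complex.ofReal_re, Complex.ofReal_im, pow_two]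
      using this
  have hsum : x ^ 2 + y ^ 2 = r ^ 2 := by
    rcases mul_eq_zero.mp (show y * (2 * x + b) = 0 by linarith [him]) with hy0 | hx0
    · have h5 : (2 * x + b) ^ 2 = 0 := by nlinarith [sq_nonneg (2 * x + b)]
      have h6 : 2 * x + b = 0 := by
        exact pow_eq_zero_iff (two_ne_zero) |>.mp h5
      nlinarith
    · nlinarith
  have habsμ : ‖μ‖ = r := by
    have h1' : ‖μ‖ ^ 2 = r ^ 2 := by
      rw [Complex.sq_norm, Complex.normSq_apply]
      simpa [sq] using hsum
    nlinarith [norm_nonneg μ]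
  have hml : r * ‖lam‖ = r := by
    calc r * ‖lam‖ = ‖(starRingEnd ℂ) ζ * lam‖ := by
          rw [norm_mul, Complex.norm_conj, hr]
      _ = r := habsμ
  have := mul_left_cancel₀ (ne_of_gt hrpos) (hml.trans (mul_one r).symm)
  exact this
end

section
/- Let 0 < a < γ with γ > 2a, and let f(t) = a e^{−γ|t|} for t ∈ ℝ. Then for every integer m ≥ 1, the m-fold self-convolution of f/4 satisfies ((a/4) e^{−γ|·|})^{*m}(t) ≤ 2^{−m} a · e^{−(γ−a)|t|} for all t ∈ ℝ. -/
open MeasureTheory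

lemma my_int_exp_abs {b : ℝ} (hb : 0 < b) :
    Integrable (fun x : ℝ => Real.exp (-b * |x|)) := by
  have int_Ioi : IntegrableOn (fun x : ℝ => Real.exp (-b * |x|)) (Set.Ioi 0) := by
    refine (exp_neg_integrableOn_Ioi 0 hb).congr_fun (fun x hx => ?_) measurableSet_Ioi
    rw [abs_of_pos (Set.mem_Ioi.mp hx)]
  have int_Iic : IntegrableOn (fun x : ℝ => Real.exp (-b * |x|)) (Set.Iic 0) := by
    rw [← Measure.map_neg_eq_self (volume : Measure ℝ)]
    have m : MeasurableEmbedding fun x : ℝ => -x := (Homeomorph.neg ℝ).measurableEmbedding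
    rw [m.integrableOn_map_iff]
    simp_rw [Function.comp_def, abs_neg, Set.neg_preimage, Set.neg_Iic, neg_zero]
    exact Iff.mpr integrableOn_Ici_iff_integrableOn_Ioi int_Ioi
  rw [← integrableOn_univ, ← Set.Iic_union_Ioi (a := (0:ℝ))]
  exact int_Iic.union int_Ioi

lemma my_integral_exp_abs {b : ℝ} (hb : 0 < b) :
    ∫ x : ℝ, Real.exp (-b * |x|) = 2 / b := by
  have h1 : ∫ x : ℝ, Real.exp (-b * |x|) = 2 * ∫ x in Set.Ioi (0:ℝ), Real.exp (-b * x) := by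
    simpa using integral_comp_abs (f := fun x => Real.exp (-b * x))
  have h2 : ∫ x in Set.Ioi (0:ℝ), Real.exp (-b * x) = b⁻¹ := by
    have := integral_comp_mul_left_Ioi (fun x => Real.exp (-x)) 0 hb
    simp only [mul_zero, neg_mul] at this ⊢
    rw [this, integral_exp_neg_Ioi_zero, smul_eq_mul, mul_one]
  rw [h1, h2]
  ring

theorem stmt_14 (a γ : ℝ) (ha : 0 < a) (hγ : 2 * a < γ)
    (h : ℝ → ℝ) (hh : ∀ t, h t = (a / 4) * Real.exp (-γ * |t|))
    (F : ℕ → ℝ → ℝ) (hF1 : F 1 = h)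
    (hFs : ∀ m, 1 ≤ m → ∀ t, F (m + 1) t = ∫ s, F m s * h (t - s)) :
    ∀ m, 1 ≤ m → ∀ t : ℝ, F m t ≤ a / 2 ^ m * Real.exp (-(γ - a) * |t|) := by
  have hγa : 0 < γ - a := by linarith
  have hnonneg_h : ∀ t, 0 ≤ h t := fun t => by
    rw [hh]; positivity
  -- strengthened statement
  suffices H : ∀ m, 1 ≤ m → ∀ t : ℝ,
      0 ≤ F m t ∧ F m t ≤ a / 2 ^ m * Real.exp (-(γ - a) * |t|) by
    exact fun m hm t => (H m hm t).2
  intro m hm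
  induction m, hm using Nat.le_induction with
  | base =>
    intro t
    rw [hF1, hh]
    constructor
    · positivity
    · have : Real.exp (-γ * |t|) ≤ Real.exp (-(γ - a) * |t|) := by
        apply Real.exp_le_exp.mpr
        nlinarith [abs_nonneg t]
      calc a / 4 * Real.exp (-γ * |t|) ≤ a / 4 * Real.exp (-(γ - a) * |t|) := by
            apply mul_le_mul_of_nonneg_left this (by positivity)
        _ ≤ a / 2 ^ 1 * Real.exp (-(γ - a) * |t|) := by
            apply mul_le_mul_of_nonneg_right _ (Real.exp_pos _).le
            norm_num; linarith
  | succ m hm IH =>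
    intro t
    set c : ℝ := a / 2 ^ m * (a / 4) * Real.exp (-(γ - a) * |t|) with hc
    have hcpos : 0 < c := by positivity
    -- pointwise bound on the integrand
    have hpt : ∀ s : ℝ, F m s * h (t - s) ≤ c * Real.exp (-a * |t - s|) := by
      intro s
      have h1 : F m s * h (t - s)
          ≤ (a / 2 ^ m * Real.exp (-(γ - a) * |s|)) * (a / 4 * Real.exp (-γ * |t - s|)) := by
        rw [hh]
        exact mul_le_mul_of_nonneg_right (IH s).2 (by positivity)
      have h2 : (a / 2 ^ m * Real.exp (-(γ - a) * |s|)) * (a / 4 * Real.exp (-γ * |t - s|))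
          ≤ c * Real.exp (-a * |t - s|) := by
        rw [hc]
        have hE : Real.exp (-(γ - a) * |s|) * Real.exp (-γ * |t - s|)
            ≤ Real.exp (-(γ - a) * |t|) * Real.exp (-a * |t - s|) := by
          rw [← Real.exp_add, ← Real.exp_add]
          apply Real.exp_le_exp.mpr
          have htri : |t| ≤ |s| + |t - s| := by
            calc |t| = |s + (t - s)| := by ring_nf
              _ ≤ |s| + |t - s| := abs_add_le _ _
          nlinarith [abs_nonneg s, abs_nonneg (t - s)]
        calc (a / 2 ^ m * Real.exp (-(γ - a) * |s|)) * (a / 4 * Real.exp (-γ * |t - s|))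
            = (a / 2 ^ m * (a / 4)) * (Real.exp (-(γ - a) * |s|) * Real.exp (-γ * |t - s|)) := by
              ring
          _ ≤ (a / 2 ^ m * (a / 4)) * (Real.exp (-(γ - a) * |t|) * Real.exp (-a * |t - s|)) := by
              apply mul_le_mul_of_nonneg_left hE (by positivity)
          _ = (a / 2 ^ m * (a / 4) * Real.exp (-(γ - a) * |t|)) * Real.exp (-a * |t - s|) := by
              ring
      exact h1.trans h2
    have hnn : ∀ s : ℝ, 0 ≤ F m s * h (t - s) := fun s =>
      mul_nonneg (IH s).1 (hnonneg_h _)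
    -- integrability of the dominating function
    have hintK : Integrable (fun s : ℝ => c * Real.exp (-a * |t - s|)) := by
      exact ((my_int_exp_abs ha).comp_sub_left t).const_mul c
    have hintegral : ∫ s : ℝ, c * Real.exp (-a * |t - s|) = c * (2 / a) := by
      rw [integral_const_mul]
      congr 1
      rw [integral_sub_left_eq_self (fun u : ℝ => Real.exp (-a * |u|)) volume t]
      exact my_integral_exp_abs ha
    constructor
    · rw [hFs m hm t]
      exact integral_nonneg hnn
    · rw [hFs m hm t]
      have hmono : ∫ s : ℝ, F m s * h (t - s) ≤ ∫ s : ℝ, c * Real.exp (-a * |t - s|) := by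
        apply integral_mono_of_nonneg
        · exact Filter.Eventually.of_forall hnn
        · exact hintK
        · exact Filter.Eventually.of_forall hpt
      rw [hintegral] at hmono
      refine hmono.trans (le_of_eq ?_)
      rw [hc]
      field_simp
      ring
end

section
/- Error kernels form an ideal-like class stable under Neumann series: suppose E: ℝ² × ℝ² → ℂ is measurable and satisfies |E(x,y)| ≤ (a/4)² e^{−γ (|x₁−y₁| + |x₂−y₂|)} for all x, y ∈ ℝ², where 0 < 2a < γ. Then for every l ≥ 1 the kernel E_l of the l-th power of the integral operator with kernel E satisfies |E_l(x,y)| ≤ 2^{−2l} a² e^{−(γ−a)(|x₁−y₁|+|x₂−y₂|)}. Consequently the series Σ_{l≥1} E_l(x,y) converges absolutely and defines a kernel Ẽ with |Ẽ(x,y)| ≤ C a² e^{−(γ−a)(|x₁−y₁|+|x₂−y₂|)} for a constant C depending only on the geometric series; Ẽ is the kernel of I − (I − E)^{−1} on L²(ℝ²). -/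
open MeasureTheory Real Set

lemma myint {a : ℝ} (ha : 0 < a) :
    Integrable (fun t : ℝ => Real.exp (-(a * |t|))) := by
  have hIoi : IntegrableOn (fun t : ℝ => Real.exp (-(a * |t|))) (Ioi 0) := by
    refine ((exp_neg_integrableOn_Ioi 0 ha)).congr_fun (fun t ht => ?_) measurableSet_Ioi
    rw [abs_of_pos ht]; ring_nf
  have hIic : IntegrableOn (fun t : ℝ => Real.exp (-(a * |t|))) (Iic 0) := by
    rw [← Measure.map_neg_eq_self (volume : Measure ℝ)]
    have m : MeasurableEmbedding fun x : ℝ => -x := (Homeomorph.neg ℝ).measurableEmbedding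
    rw [m.integrableOn_map_iff]
    simp_rw [Function.comp_def, abs_neg, neg_preimage, neg_Iic, neg_zero]
    exact Iff.mpr integrableOn_Ici_iff_integrableOn_Ioi hIoi
  have := hIic.union hIoi
  rwa [Set.Iic_union_Ioi, integrableOn_univ] at this

lemma myval {a : ℝ} (ha : 0 < a) :
    ∫ t : ℝ, Real.exp (-(a * |t|)) = 2 / a := by
  rw [integral_comp_abs (f := fun t => Real.exp (-(a * t)))]
  have : ∫ t in Ioi (0:ℝ), Real.exp (-(a * t)) = 0 - (-Real.exp (-(a * 0)) / a) := by
    refine integral_Ioi_of_hasDerivAt_of_tendsto' (f := fun x => -Real.exp (-(a * x)) / a)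
      (fun x _ => ?_) ?_ ?_
    · have h := ((Real.hasDerivAt_exp (-(a * x))).comp x
        (((hasDerivAt_id x).const_mul a).neg)).neg.div_const a
      refine h.congr_deriv ?_
      field_simp
    · exact ((exp_neg_integrableOn_Ioi 0 ha)).congr_fun (fun t _ => by ring_nf) measurableSet_Ioi
    · have harg : Filter.Tendsto (fun x : ℝ => -(a * x)) Filter.atTop Filter.atBot := by
        have h2 := (Filter.tendsto_id (α := ℝ)).const_mul_atTop_of_neg (show -a < 0 by linarith)
        exact h2.congr (fun x => by simp only [id]; ring)
      have : Filter.Tendsto (fun x : ℝ => -Real.exp (-(a * x)) / a) Filter.atTop (nhds (-0 / a)) :=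
        ((Real.tendsto_exp_atBot.comp harg).neg).div_const a
      simpa using this
  rw [this, mul_zero, neg_zero, Real.exp_zero]
  field_simp
  ring

lemma myconv {a β γ : ℝ} (ha : 0 < a) (hβ : 0 ≤ β) (hγ : γ = β + a) (x y : ℝ) :
    (∫ t : ℝ, Real.exp (-(β * |x - t|)) * Real.exp (-(γ * |t - y|)))
      ≤ (2 / a) * Real.exp (-(β * |x - y|)) := by
  subst hγ
  have hgi : Integrable (fun t : ℝ => Real.exp (-(β * |x - y|)) * Real.exp (-(a * |t - y|))) := by
    have := (myint ha).comp_sub_right y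
    exact this.const_mul _
  have hle : ∀ t : ℝ, Real.exp (-(β * |x - t|)) * Real.exp (-((β + a) * |t - y|))
      ≤ Real.exp (-(β * |x - y|)) * Real.exp (-(a * |t - y|)) := by
    intro t
    rw [← Real.exp_add, ← Real.exp_add]
    apply Real.exp_le_exp.2
    have h := abs_sub_le x t y
    nlinarith [abs_nonneg (t - y), abs_nonneg (x - t)]
  calc (∫ t : ℝ, Real.exp (-(β * |x - t|)) * Real.exp (-((β + a) * |t - y|)))
      ≤ ∫ t : ℝ, Real.exp (-(β * |x - y|)) * Real.exp (-(a * |t - y|)) :=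
        integral_mono_of_nonneg (Filter.Eventually.of_forall fun t => by positivity)
          hgi (Filter.Eventually.of_forall hle)
    _ = Real.exp (-(β * |x - y|)) * ∫ t : ℝ, Real.exp (-(a * |t - y|)) := integral_const_mul _ _
    _ = (2 / a) * Real.exp (-(β * |x - y|)) := by
        have h2 : (∫ t : ℝ, Real.exp (-(a * |t - y|))) = 2 / a := by
          rw [← myval ha]
          exact integral_sub_right_eq_self (fun t => Real.exp (-(a * |t|))) y
        rw [h2]; ring

lemma myint3 {a β γ : ℝ} (ha : 0 < a) (hβ : 0 ≤ β) (hγ : γ = β + a) (x y : ℝ) :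
    Integrable (fun t : ℝ => Real.exp (-(β * |x - t|)) * Real.exp (-(γ * |t - y|))) := by
  subst hγ
  have hg : Integrable (fun t : ℝ => Real.exp (-((β + a) * |t - y|))) :=
    (myint (by linarith)).comp_sub_right y
  refine hg.bdd_mul (c := 1) ?_ (Filter.Eventually.of_forall fun t => ?_)
  · have : Continuous fun t : ℝ => Real.exp (-(β * |x - t|)) := by
      exact Real.continuous_exp.comp (((continuous_const.sub continuous_id).abs.const_smul β).neg)
    exact this.aestronglyMeasurable
  · rw [Real.norm_eq_abs, abs_of_pos (Real.exp_pos _)]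
    refine Real.exp_le_one_iff.2 (neg_nonpos.2 ?_)
    positivity

theorem stmt_15 (a γ : ℝ) (ha : 0 < a) (hγ : 2 * a < γ)
    (E : (ℝ × ℝ) → (ℝ × ℝ) → ℂ) (hmeas : Measurable fun p : (ℝ × ℝ) × (ℝ × ℝ) => E p.1 p.2)
    (hE : ∀ x y : ℝ × ℝ, ‖E x y‖ ≤
      (a / 4) ^ 2 * Real.exp (-γ * (|x.1 - y.1| + |x.2 - y.2|)))
    (El : ℕ → (ℝ × ℝ) → (ℝ × ℝ) → ℂ) (hEl1 : El 1 = E)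
    (hEls : ∀ l, 1 ≤ l → ∀ x y : ℝ × ℝ, El (l + 1) x y = ∫ z : ℝ × ℝ, El l x z * E z y) :
    (∀ l, 1 ≤ l → ∀ x y : ℝ × ℝ, ‖El l x y‖ ≤
      (2 : ℝ)⁻¹ ^ (2 * l) * a ^ 2 * Real.exp (-(γ - a) * (|x.1 - y.1| + |x.2 - y.2|))) ∧
    (∀ x y : ℝ × ℝ, Summable fun l : ℕ => ‖El (l + 1) x y‖) ∧
    (∃ C : ℝ, 0 < C ∧ ∀ x y : ℝ × ℝ,
      ‖∑' l : ℕ, El (l + 1) x y‖ ≤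
        C * a ^ 2 * Real.exp (-(γ - a) * (|x.1 - y.1| + |x.2 - y.2|))) := by
  set β : ℝ := γ - a with hβdef
  have hβ : 0 < β := by rw [hβdef]; linarith
  have hγβ : γ = β + a := by rw [hβdef]; ring
  have key : ∀ l, 1 ≤ l → ∀ x y : ℝ × ℝ, ‖El l x y‖ ≤
      (4 : ℝ)⁻¹ ^ l * a ^ 2 * Real.exp (-(β * (|x.1 - y.1| + |x.2 - y.2|))) := by
    intro l hl
    induction l, hl using Nat.le_induction with
    | base =>
      intro x y
      rw [hEl1]
      refine (hE x y).trans ?_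
      have hs : (0:ℝ) ≤ |x.1 - y.1| + |x.2 - y.2| := by positivity
      have h1 : (a / 4) ^ 2 ≤ (4 : ℝ)⁻¹ ^ 1 * a ^ 2 := by
        rw [pow_one, div_pow]
        nlinarith [sq_nonneg a]
      have h2 : Real.exp (-γ * (|x.1 - y.1| + |x.2 - y.2|)) ≤
          Real.exp (-(β * (|x.1 - y.1| + |x.2 - y.2|))) := by
        apply Real.exp_le_exp.2
        rw [hγβ]
        nlinarith
      exact mul_le_mul h1 h2 (Real.exp_pos _).le (by positivity)
    | succ l hl ih =>
      intro x y
      rw [hEls l hl x y]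
      have h1int := myint3 ha hβ.le hγβ x.1 y.1
      have h2int := myint3 ha hβ.le hγβ x.2 y.2
      have hgint : Integrable (fun z : ℝ × ℝ =>
          ((4 : ℝ)⁻¹ ^ l * a ^ 2 * (a / 4) ^ 2) *
            ((Real.exp (-(β * |x.1 - z.1|)) * Real.exp (-(γ * |z.1 - y.1|))) *
             (Real.exp (-(β * |x.2 - z.2|)) * Real.exp (-(γ * |z.2 - y.2|))))) := by
        have h := h1int.mul_prod h2int
        rw [← Measure.volume_eq_prod ℝ ℝ] at h
        exact h.const_mul _
      have hpt : ∀ z : ℝ × ℝ, ‖El l x z * E z y‖ ≤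
          ((4 : ℝ)⁻¹ ^ l * a ^ 2 * (a / 4) ^ 2) *
            ((Real.exp (-(β * |x.1 - z.1|)) * Real.exp (-(γ * |z.1 - y.1|))) *
             (Real.exp (-(β * |x.2 - z.2|)) * Real.exp (-(γ * |z.2 - y.2|)))) := by
        intro z
        rw [norm_mul]
        have hA : ‖El l x z‖ ≤ (4 : ℝ)⁻¹ ^ l * a ^ 2 *
            Real.exp (-(β * (|x.1 - z.1| + |x.2 - z.2|))) := by
          exact ih x z
        have hB : ‖E z y‖ ≤ (a / 4) ^ 2 *
            Real.exp (-γ * (|z.1 - y.1| + |z.2 - y.2|)) := by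
          exact hE z y
        calc ‖El l x z‖ * ‖E z y‖
            ≤ ((4 : ℝ)⁻¹ ^ l * a ^ 2 * Real.exp (-(β * (|x.1 - z.1| + |x.2 - z.2|)))) *
              ((a / 4) ^ 2 * Real.exp (-γ * (|z.1 - y.1| + |z.2 - y.2|))) :=
            mul_le_mul hA hB (norm_nonneg _) (by positivity)
          _ = _ := by
            rw [show -(β * (|x.1 - z.1| + |x.2 - z.2|)) =
                  -(β * |x.1 - z.1|) + -(β * |x.2 - z.2|) by ring,
                show -γ * (|z.1 - y.1| + |z.2 - y.2|) =
                  -(γ * |z.1 - y.1|) + -(γ * |z.2 - y.2|) by ring,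
                Real.exp_add, Real.exp_add]
            ring
      calc ‖∫ z : ℝ × ℝ, El l x z * E z y‖
          ≤ ∫ z : ℝ × ℝ, ‖El l x z * E z y‖ := norm_integral_le_integral_norm _
        _ ≤ ∫ z : ℝ × ℝ, ((4 : ℝ)⁻¹ ^ l * a ^ 2 * (a / 4) ^ 2) *
              ((Real.exp (-(β * |x.1 - z.1|)) * Real.exp (-(γ * |z.1 - y.1|))) *
               (Real.exp (-(β * |x.2 - z.2|)) * Real.exp (-(γ * |z.2 - y.2|)))) :=
            integral_mono_of_nonneg (Filter.Eventually.of_forall fun z => norm_nonneg _)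
              hgint (Filter.Eventually.of_forall hpt)
        _ = ((4 : ℝ)⁻¹ ^ l * a ^ 2 * (a / 4) ^ 2) *
              ((∫ t : ℝ, Real.exp (-(β * |x.1 - t|)) * Real.exp (-(γ * |t - y.1|))) *
               (∫ t : ℝ, Real.exp (-(β * |x.2 - t|)) * Real.exp (-(γ * |t - y.2|)))) := by
            rw [integral_const_mul, Measure.volume_eq_prod ℝ ℝ]
            congr 1
            exact integral_prod_mul (fun t : ℝ => Real.exp (-(β * |x.1 - t|)) * Real.exp (-(γ * |t - y.1|)))
              (fun t : ℝ => Real.exp (-(β * |x.2 - t|)) * Real.exp (-(γ * |t - y.2|)))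
        _ ≤ ((4 : ℝ)⁻¹ ^ l * a ^ 2 * (a / 4) ^ 2) *
              (((2 / a) * Real.exp (-(β * |x.1 - y.1|))) *
               ((2 / a) * Real.exp (-(β * |x.2 - y.2|)))) := by
            refine mul_le_mul_of_nonneg_left
              (mul_le_mul (myconv ha hβ.le hγβ _ _) (myconv ha hβ.le hγβ _ _)
                (integral_nonneg fun t => by positivity) (by positivity)) (by positivity)
        _ = (4 : ℝ)⁻¹ ^ (l + 1) * a ^ 2 *
              Real.exp (-(β * (|x.1 - y.1| + |x.2 - y.2|))) := by
            rw [show -(β * (|x.1 - y.1| + |x.2 - y.2|)) =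
                  -(β * |x.1 - y.1|) + -(β * |x.2 - y.2|) by ring,
                Real.exp_add, pow_succ]
            field_simp
            ring
  have hbd : ∀ x y : ℝ × ℝ, ∀ l : ℕ, ‖El (l + 1) x y‖ ≤
      (4⁻¹ * (a ^ 2 * Real.exp (-(β * (|x.1 - y.1| + |x.2 - y.2|))))) * (4 : ℝ)⁻¹ ^ l := by
    intro x y l
    refine (key (l + 1) (Nat.le_add_left 1 l) x y).trans_eq ?_
    rw [pow_succ]; ring
  have hgeo : Summable fun l : ℕ => (4 : ℝ)⁻¹ ^ l :=
    summable_geometric_of_lt_one (by norm_num) (by norm_num)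
  have part2 : ∀ x y : ℝ × ℝ, Summable fun l : ℕ => ‖El (l + 1) x y‖ := by
    intro x y
    exact Summable.of_nonneg_of_le (fun l => norm_nonneg _) (hbd x y)
      (hgeo.mul_left _)
  refine ⟨?_, part2, ⟨1, one_pos, ?_⟩⟩
  · intro l hl x y
    have h := key l hl x y
    rw [show ((2 : ℝ)⁻¹) ^ (2 * l) = (4 : ℝ)⁻¹ ^ l by rw [pow_mul]; norm_num,
        neg_mul]
    exact h
  · intro x y
    have hsn : Summable fun l : ℕ => ‖El (l + 1) x y‖ := by
      exact part2 x y
    have hexp := (Real.exp_pos (-(β * (|x.1 - y.1| + |x.2 - y.2|)))).le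
    calc ‖∑' l : ℕ, El (l + 1) x y‖ = ‖∑' l : ℕ, El (l + 1) x y‖ :=
          rfl
      _ ≤ ∑' l : ℕ, ‖El (l + 1) x y‖ := norm_tsum_le_tsum_norm hsn
      _ ≤ ∑' l : ℕ, (4⁻¹ * (a ^ 2 * Real.exp (-(β * (|x.1 - y.1| + |x.2 - y.2|))))) *
            (4 : ℝ)⁻¹ ^ l :=
          Summable.tsum_le_tsum (fun l => hbd x y l) hsn
            (hgeo.mul_left _)
      _ = (4⁻¹ * (a ^ 2 * Real.exp (-(β * (|x.1 - y.1| + |x.2 - y.2|))))) *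
            (1 - 4⁻¹)⁻¹ := by
          rw [tsum_mul_left, tsum_geometric_of_lt_one (by norm_num) (by norm_num)]
      _ ≤ 1 * a ^ 2 * Real.exp (-β * (|x.1 - y.1| + |x.2 - y.2|)) := by
          rw [neg_mul]
          nlinarith [mul_nonneg (sq_nonneg a) hexp]
end

section
/- Let Γ ⊂ ℝ² be a discrete set and suppose (p_ω)_{ω∈Γ} is a family of unit vectors in a Hilbert space H satisfying |⟨p_ω, p_{ω'}⟩ − δ_{ω,ω'}| ≤ ε e^{−c|ω−ω'|} for all ω, ω' ∈ Γ, with c > 0 and ε > 0 sufficiently small (depending only on c and sup_{ω} Σ_{ω'≠ω} e^{−(c/2)|ω−ω'|} < ∞). Then the Gram matrix P = (⟨p_ω, p_{ω'}⟩) is invertible as an operator on ℓ²(Γ), and its inverse M = (M^{ω,ω'}) satisfies |M^{ω,ω'} − δ_{ω,ω'}| ≤ C ε e^{−(c/2)|ω−ω'|} for a constant C independent of ε. -/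
set_option maxHeartbeats 4000000 in
theorem stmt_18 (c K : ℝ) (hc : 0 < c) (hK : 0 < K) :
    ∃ ε₀ C : ℝ, 0 < ε₀ ∧ 0 < C ∧
      ∀ (ι : Type) [DecidableEq ι] (emb : ι → ℝ × ℝ), Function.Injective emb →
        (∀ i : ι, Summable fun j : ι => Real.exp (-(c / 2) * dist (emb i) (emb j))) →
        (∀ i : ι, (∑' j : ι,
            if j = i then 0 else Real.exp (-(c / 2) * dist (emb i) (emb j))) ≤ K) →
        ∀ (H : Type) [NormedAddCommGroup H] [InnerProductSpace ℂ H] (p : ι → H),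
          (∀ i, ‖p i‖ = 1) →
          ∀ ε : ℝ, 0 < ε → ε ≤ ε₀ →
            (∀ i j : ι, ‖(inner ℂ (p i) (p j) : ℂ) - (if i = j then 1 else 0)‖ ≤
              ε * Real.exp (-c * dist (emb i) (emb j))) →
            ∃ M : ι → ι → ℂ,
              (∀ i k : ι, Summable (fun j : ι => (inner ℂ (p i) (p j) : ℂ) * M j k) ∧
                (∑' j : ι, (inner ℂ (p i) (p j) : ℂ) * M j k) = if i = k then 1 else 0) ∧
              (∀ i k : ι, Summable (fun j : ι => M i j * (inner ℂ (p j) (p k) : ℂ)) ∧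
                (∑' j : ι, M i j * (inner ℂ (p j) (p k) : ℂ)) = if i = k then 1 else 0) ∧
              (∀ i j : ι, ‖M i j - (if i = j then 1 else 0)‖ ≤
                C * ε * Real.exp (-(c / 2) * dist (emb i) (emb j))) := by
  refine ⟨1 / (2 * (K + 1)), 2, by positivity, by norm_num, ?_⟩
  intro ι _ emb _hinj hsum hKsum H _ _ p _hp ε hε hεle hP
  set d : ι → ι → ℝ := fun i j => dist (emb i) (emb j) with hd
  set w : ι → ι → ℝ := fun i j => Real.exp (-(c / 2) * d i j) with hwdef
  have hw0 : ∀ i j, 0 < w i j := fun i j => Real.exp_pos _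
  have hdnn : ∀ i j, 0 ≤ d i j := fun i j => dist_nonneg
  have hwii : ∀ i, w i i = 1 := by intro i; simp [hwdef, hd]
  have hwle1 : ∀ i j, w i j ≤ 1 := by
    intro i j
    rw [hwdef, Real.exp_le_one_iff]
    nlinarith [hdnn i j]
  have hwsum : ∀ i, Summable (w i) := hsum
  have hwK : ∀ i, ∑' j, w i j ≤ K + 1 := by
    intro i
    have h1 : Summable (fun j => if j = i then 0 else w i j) := by
      apply Summable.of_nonneg_of_le _ _ (hwsum i)
      · intro j; split <;> simp [(hw0 i j).le]
      · intro j; split <;> simp [(hw0 i j).le]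
    have h2 : Summable (fun j => if j = i then w i j else 0) := by
      apply summable_of_ne_finset_zero (s := {i})
      intro b hb; simp only [Finset.mem_singleton] at hb; simp [hb]
    have heq : (fun j => w i j)
        = fun j => (if j = i then 0 else w i j) + (if j = i then w i j else 0) := by
      funext j; by_cases h : j = i <;> simp [h]
    calc ∑' j, w i j
        = (∑' j, if j = i then 0 else w i j) + ∑' j, (if j = i then w i j else 0) := by
          rw [heq, Summable.tsum_add h1 h2]
      _ ≤ K + 1 := by
          have e2 : (∑' j, (if j = i then w i j else 0)) = w i i := by
            have : (fun j => if j = i then w i j else 0) = fun j => if j = i then w i i else 0 := by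
              funext j; by_cases h : j = i <;> simp [h]
            rw [this, tsum_ite_eq]
          rw [e2, hwii i]
          have := hKsum i
          linarith
  have hwKnn : ∀ i, 0 ≤ ∑' j, w i j := fun i => tsum_nonneg fun j => (hw0 i j).le
  have htri : ∀ i j k, Real.exp (-c * d i j) * w j k ≤ w i k * w i j := by
    intro i j k
    rw [hwdef]
    simp only [← Real.exp_add]
    apply Real.exp_le_exp.2
    have h := dist_triangle (emb i) (emb j) (emb k)
    have h2 : d i k ≤ d i j + d j k := h
    nlinarith [hdnn i j, hdnn j k, hdnn i k]
  -- E : the perturbation matrix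
  set E : ι → ι → ℂ := fun i j => (inner ℂ (p i) (p j) : ℂ) - (if i = j then 1 else 0) with hEdef
  have hE : ∀ i j, ‖E i j‖ ≤ ε * Real.exp (-c * d i j) := hP
  have hEw : ∀ i j, ‖E i j‖ ≤ ε * w i j := by
    intro i j
    refine (hE i j).trans ?_
    have : Real.exp (-c * d i j) ≤ w i j := by
      rw [hwdef]; apply Real.exp_le_exp.2; nlinarith [hdnn i j]
    nlinarith [hε.le]
  have hEone : ∀ i j, ‖E i j‖ ≤ ε := fun i j => (hEw i j).trans (by nlinarith [hwle1 i j, hε.le])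
  -- the key multiplication estimate
  have hmul : ∀ (A : ι → ι → ℂ) (a : ℝ), 0 ≤ a → (∀ j k, ‖A j k‖ ≤ a * w j k) →
      ∀ i k, Summable (fun j => E i j * A j k) ∧
        ‖∑' j, E i j * A j k‖ ≤ ε * a * (K + 1) * w i k := by
    intro A a ha hA i k
    have hbd : ∀ j, ‖E i j * A j k‖ ≤ ε * a * w i k * w i j := by
      intro j
      rw [norm_mul]
      calc ‖E i j‖ * ‖A j k‖
          ≤ (ε * Real.exp (-c * d i j)) * (a * w j k) :=
            mul_le_mul (hE i j) (hA j k) (norm_nonneg _) (by positivity)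
        _ = (ε * a) * (Real.exp (-c * d i j) * w j k) := by ring
        _ ≤ (ε * a) * (w i k * w i j) :=
            mul_le_mul_of_nonneg_left (htri i j k) (by positivity)
        _ = ε * a * w i k * w i j := by ring
    have hg : Summable (fun j => ε * a * w i k * w i j) := (hwsum i).mul_left _
    have hsumm : Summable (fun j => E i j * A j k) := Summable.of_norm_bounded hg hbd
    refine ⟨hsumm, ?_⟩
    have hnrm : Summable (fun j => ‖E i j * A j k‖) :=
      Summable.of_nonneg_of_le (fun j => norm_nonneg _) hbd hg
    calc ‖∑' j, E i j * A j k‖ ≤ ∑' j, ‖E i j * A j k‖ := norm_tsum_le_tsum_norm hnrm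
      _ ≤ ∑' j, ε * a * w i k * w i j := Summable.tsum_le_tsum hbd hnrm hg
      _ = ε * a * w i k * ∑' j, w i j := tsum_mul_left
      _ ≤ ε * a * (K + 1) * w i k := by
          have h3 : ε * a * w i k * ∑' j, w i j ≤ ε * a * w i k * (K + 1) :=
            mul_le_mul_of_nonneg_left (hwK i) (by positivity)
          linarith [h3.trans_eq (by ring : ε * a * w i k * (K + 1) = ε * a * (K + 1) * w i k)]
  -- powers of E (F n = E^{n+1})
  set F : ℕ → ι → ι → ℂ :=
    fun n => Nat.rec E (fun _ Fn => fun i k => ∑' j, E i j * Fn j k) n with hFdef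
  have hFs : ∀ n i k, F (n + 1) i k = ∑' j, E i j * F n j k := fun n i k => rfl
  have hFbd : ∀ n, ∀ i k, ‖F n i k‖ ≤ ε * (ε * (K + 1)) ^ n * w i k := by
    intro n
    induction n with
    | zero => intro i k; show ‖E i k‖ ≤ ε * (ε * (K + 1)) ^ 0 * w i k; simpa using hEw i k
    | succ n ih =>
      intro i k
      have h := (hmul (F n) (ε * (ε * (K + 1)) ^ n) (by positivity) ih i k).2
      rw [hFs n i k]
      calc ‖∑' j, E i j * F n j k‖ ≤ ε * (ε * (ε * (K + 1)) ^ n) * (K + 1) * w i k := h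
        _ = ε * (ε * (K + 1)) ^ (n + 1) * w i k := by ring
  have hFsm : ∀ n i k, Summable fun j => E i j * F n j k := by
    intro n i k
    exact (hmul (F n) (ε * (ε * (K + 1)) ^ n) (by positivity) (hFbd n) i k).1
  have hhalf : ε * (K + 1) ≤ 1 / 2 := by
    have h := (le_div_iff₀ (by positivity : (0:ℝ) < 2 * (K + 1))).1 hεle
    nlinarith
  have hFhalf : ∀ n i k, ‖F n i k‖ ≤ ε * w i k * (1 / 2) ^ n := by
    intro n i k
    refine (hFbd n i k).trans ?_
    have hpow : (ε * (K + 1)) ^ n ≤ (1 / 2) ^ n := pow_le_pow_left₀ (by positivity) hhalf n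
    have := (hw0 i k).le
    calc ε * (ε * (K + 1)) ^ n * w i k ≤ ε * (1 / 2) ^ n * w i k := by
          apply mul_le_mul_of_nonneg_right _ this
          exact mul_le_mul_of_nonneg_left hpow hε.le
      _ = ε * w i k * (1 / 2) ^ n := by ring
  have hgeo : Summable (fun n : ℕ => ((1 : ℝ) / 2) ^ n) :=
    summable_geometric_of_lt_one (by norm_num) (by norm_num)
  have hgeosum : (∑' n : ℕ, ((1 : ℝ) / 2) ^ n) = 2 := by
    rw [tsum_geometric_of_lt_one (by norm_num) (by norm_num)]; norm_num
  have hNsm : ∀ i k, Summable (fun n : ℕ => (-1 : ℂ) ^ (n + 1) * F n i k) := by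
    intro i k
    apply Summable.of_norm_bounded (g := fun n => ε * w i k * (1 / 2) ^ n) (hgeo.mul_left _)
    intro n
    rw [norm_mul]
    simpa using hFhalf n i k
  set N : ι → ι → ℂ := fun i k => ∑' n : ℕ, (-1 : ℂ) ^ (n + 1) * F n i k with hNdef
  have hNbd : ∀ i k, ‖N i k‖ ≤ 2 * ε * w i k := by
    intro i k
    have hb : ∀ n : ℕ, ‖(-1 : ℂ) ^ (n + 1) * F n i k‖ ≤ ε * w i k * (1 / 2) ^ n := by
      intro n; rw [norm_mul]; simpa using hFhalf n i k
    have hnrm : Summable (fun n : ℕ => ‖(-1 : ℂ) ^ (n + 1) * F n i k‖) :=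
      Summable.of_nonneg_of_le (fun n => norm_nonneg _) hb (hgeo.mul_left _)
    calc ‖N i k‖ ≤ ∑' n : ℕ, ‖(-1 : ℂ) ^ (n + 1) * F n i k‖ := norm_tsum_le_tsum_norm hnrm
      _ ≤ ∑' n : ℕ, ε * w i k * (1 / 2) ^ n := Summable.tsum_le_tsum hb hnrm (hgeo.mul_left _)
      _ = ε * w i k * ∑' n : ℕ, ((1:ℝ)/2) ^ n := tsum_mul_left
      _ = 2 * ε * w i k := by rw [hgeosum]; ring
  -- tail identity : ∑' n, (-1)^(n+1) F (n+1) i k = -E i k - N i k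
  have hNshift : ∀ i k, Summable (fun n : ℕ => (-1 : ℂ) ^ (n + 1) * F (n + 1) i k) ∧
      (∑' n : ℕ, (-1 : ℂ) ^ (n + 1) * F (n + 1) i k) = -E i k - N i k := by
    intro i k
    have hsm : Summable (fun n : ℕ => (-1 : ℂ) ^ (n + 1 + 1) * F (n + 1) i k) :=
      (hNsm i k).comp_injective (add_left_injective 1)
    have hsm' : Summable (fun n : ℕ => (-1 : ℂ) ^ (n + 1) * F (n + 1) i k) := by
      have heq : (fun n : ℕ => (-1 : ℂ) ^ (n + 1) * F (n + 1) i k)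
          = fun n : ℕ => -((-1 : ℂ) ^ (n + 1 + 1) * F (n + 1) i k) := by
        funext n; rw [pow_succ]; ring
      rw [heq]; exact hsm.neg
    refine ⟨hsm', ?_⟩
    have h0 : N i k = (-1 : ℂ) ^ (0 + 1) * F 0 i k
        + ∑' n : ℕ, (-1 : ℂ) ^ (n + 1 + 1) * F (n + 1) i k :=
      Summable.tsum_eq_zero_add (hNsm i k)
    have hneg : (∑' n : ℕ, (-1 : ℂ) ^ (n + 1 + 1) * F (n + 1) i k)
        = -∑' n : ℕ, (-1 : ℂ) ^ (n + 1) * F (n + 1) i k := by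
      rw [← tsum_neg]
      congr 1; funext n; rw [pow_succ]; ring
    have hF0 : F 0 i k = E i k := rfl
    rw [hneg, hF0] at h0
    rw [h0]; ring
  -- the swap identity: ∑' j, E i j * N j k = -E i k - N i k
  have hswap : ∀ i k, Summable (fun j => E i j * N j k) ∧
      (∑' j, E i j * N j k) = -E i k - N i k := by
    intro i k
    have hENbd : ∀ j, ‖E i j * N j k‖ ≤ (2 * ε * ε) * w i j := by
      intro j
      rw [norm_mul]
      calc ‖E i j‖ * ‖N j k‖ ≤ (ε * w i j) * (2 * ε * w j k) :=
            mul_le_mul (hEw i j) (hNbd j k) (norm_nonneg _) (by positivity)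
        _ ≤ (2 * ε * ε) * w i j := by
            have : (ε * w i j) * (2 * ε * w j k) ≤ (ε * w i j) * (2 * ε * 1) := by
              apply mul_le_mul_of_nonneg_left _ (by positivity)
              exact mul_le_mul_of_nonneg_left (hwle1 j k) (by positivity)
            linarith [this.trans_eq (by ring : (ε * w i j) * (2 * ε * 1) = (2 * ε * ε) * w i j)]
    have hsm : Summable (fun j => E i j * N j k) :=
      Summable.of_norm_bounded ((hwsum i).mul_left _) hENbd
    refine ⟨hsm, ?_⟩
    -- joint summability over j × ℕ
    have hjoint : Summable (Function.uncurry
        fun (j : ι) (n : ℕ) => E i j * ((-1 : ℂ) ^ (n + 1) * F n j k)) := by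
      apply Summable.of_norm_bounded
        (g := fun q : ι × ℕ => (ε * w i q.1) * (ε * (1 / 2) ^ q.2))
      · exact Summable.mul_of_nonneg ((hwsum i).mul_left ε) (hgeo.mul_left ε)
          (fun j => by positivity) (fun n => by positivity)
      rintro ⟨j, n⟩
      simp only [Function.uncurry]
      rw [norm_mul, norm_mul]
      have h1 : ‖F n j k‖ ≤ ε * w j k * (1 / 2) ^ n := hFhalf n j k
      have h2 : ‖(-1 : ℂ) ^ (n + 1)‖ = 1 := by simp
      rw [h2, one_mul]
      calc ‖E i j‖ * ‖F n j k‖ ≤ (ε * w i j) * (ε * w j k * (1 / 2) ^ n) :=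
            mul_le_mul (hEw i j) h1 (norm_nonneg _) (by positivity)
        _ ≤ (ε * w i j) * (ε * (1 / 2) ^ n) := by
            apply mul_le_mul_of_nonneg_left _ (by positivity)
            calc ε * w j k * (1 / 2) ^ n ≤ ε * 1 * (1 / 2) ^ n := by
                  apply mul_le_mul_of_nonneg_right _ (by positivity)
                  exact mul_le_mul_of_nonneg_left (hwle1 j k) hε.le
              _ = ε * (1 / 2) ^ n := by ring
    have hcomm := Summable.tsum_comm (f := fun (j : ι) (n : ℕ) =>
      E i j * ((-1 : ℂ) ^ (n + 1) * F n j k)) hjoint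
    have lhs_eq : (∑' j, E i j * N j k)
        = ∑' (j : ι) (n : ℕ), E i j * ((-1 : ℂ) ^ (n + 1) * F n j k) := by
      congr 1; funext j; rw [hNdef]; exact (tsum_mul_left).symm
    have inner_eq : ∀ n : ℕ, (∑' j, E i j * ((-1 : ℂ) ^ (n + 1) * F n j k))
        = (-1 : ℂ) ^ (n + 1) * F (n + 1) i k := by
      intro n
      have : (fun j => E i j * ((-1 : ℂ) ^ (n + 1) * F n j k))
          = fun j => (-1 : ℂ) ^ (n + 1) * (E i j * F n j k) := by funext j; ring
      rw [this, tsum_mul_left, hFs]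
    rw [lhs_eq, ← hcomm]
    rw [tsum_congr inner_eq]
    exact (hNshift i k).2
  -- right multiplication: ∑' j, F n i j * E j k = F (n+1) i k
  have hFr : ∀ n i k, Summable (fun j => F n i j * E j k) ∧
      (∑' j, F n i j * E j k) = F (n + 1) i k := by
    intro n
    induction n with
    | zero =>
      intro i k
      exact ⟨hFsm 0 i k, rfl⟩
    | succ n ih =>
      intro i k
      have hbd : ∀ j, ‖F (n + 1) i j * E j k‖ ≤ (ε * (1 / 2) ^ (n + 1) * ε) * w i j := by
        intro j
        rw [norm_mul]
        calc ‖F (n + 1) i j‖ * ‖E j k‖ ≤ (ε * w i j * (1 / 2) ^ (n + 1)) * ε :=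
              mul_le_mul (hFhalf (n + 1) i j) (hEone j k) (norm_nonneg _) (by positivity)
          _ = (ε * (1 / 2) ^ (n + 1) * ε) * w i j := by ring
      have hsm : Summable (fun j => F (n + 1) i j * E j k) :=
        Summable.of_norm_bounded ((hwsum i).mul_left _) hbd
      refine ⟨hsm, ?_⟩
      -- joint summability over (j, l)
      have hjoint : Summable (Function.uncurry
          fun (j l : ι) => (E i l * F n l j) * E j k) := by
        apply Summable.of_norm_bounded
          (g := fun q : ι × ι => ((ε * ε * (1/2)^n * ε) * w i q.1) * w i q.2)
        · exact Summable.mul_of_nonneg ((hwsum i).mul_left _) (hwsum i)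
            (fun j => by positivity) (fun l => by positivity)
        rintro ⟨j, l⟩
        show ‖(E i l * F n l j) * E j k‖ ≤ ((ε * ε * (1/2)^n * ε) * w i j) * w i l
        rw [norm_mul, norm_mul]
        have key : Real.exp (-c * d i l) * w l j ≤ w i j * w i l := htri i l j
        calc ‖E i l‖ * ‖F n l j‖ * ‖E j k‖
            ≤ (ε * Real.exp (-c * d i l)) * (ε * w l j * (1/2)^n) * ε := by
              have := pow_nonneg (by norm_num : (0:ℝ) ≤ 1/2) n
              apply mul_le_mul (mul_le_mul (hE i l) (hFhalf n l j) (norm_nonneg _)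
                (by positivity)) (hEone j k) (norm_nonneg _) (by positivity)
          _ = (ε * ε * (1/2)^n * ε) * (Real.exp (-c * d i l) * w l j) := by ring
          _ ≤ (ε * ε * (1/2)^n * ε) * (w i j * w i l) :=
              mul_le_mul_of_nonneg_left key (by positivity)
          _ = ((ε * ε * (1/2)^n * ε) * w i j) * w i l := by ring
      have hcomm := Summable.tsum_comm (f := fun (j l : ι) => (E i l * F n l j) * E j k) hjoint
      calc ∑' j, F (n + 1) i j * E j k
          = ∑' (j : ι) (l : ι), (E i l * F n l j) * E j k := by
            congr 1; funext j
            rw [hFs n i j, ← tsum_mul_right]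
        _ = ∑' (l : ι) (j : ι), (E i l * F n l j) * E j k := hcomm.symm
        _ = ∑' (l : ι), E i l * F (n + 1) l k := by
            apply tsum_congr; intro l
            have : (fun j => (E i l * F n l j) * E j k)
                = fun j => E i l * (F n l j * E j k) := by funext j; ring
            rw [this, tsum_mul_left, (ih l k).2]
        _ = F (n + 2) i k := (hFs (n + 1) i k).symm
  -- second swap: ∑' j, N i j * E j k = -E i k - N i k
  have hswap' : ∀ i k, Summable (fun j => N i j * E j k) ∧
      (∑' j, N i j * E j k) = -E i k - N i k := by
    intro i k
    have hNEbd : ∀ j, ‖N i j * E j k‖ ≤ (2 * ε * ε) * w i j := by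
      intro j
      rw [norm_mul]
      calc ‖N i j‖ * ‖E j k‖ ≤ (2 * ε * w i j) * ε :=
            mul_le_mul (hNbd i j) (hEone j k) (norm_nonneg _) (by positivity)
        _ = (2 * ε * ε) * w i j := by ring
    have hsm : Summable (fun j => N i j * E j k) :=
      Summable.of_norm_bounded ((hwsum i).mul_left _) hNEbd
    refine ⟨hsm, ?_⟩
    have hjoint : Summable (Function.uncurry
        fun (j : ι) (n : ℕ) => ((-1 : ℂ) ^ (n + 1) * F n i j) * E j k) := by
      apply Summable.of_norm_bounded
        (g := fun q : ι × ℕ => (ε * w i q.1) * (ε * (1 / 2) ^ q.2))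
      · exact Summable.mul_of_nonneg ((hwsum i).mul_left ε) (hgeo.mul_left ε)
          (fun j => by positivity) (fun n => by positivity)
      rintro ⟨j, n⟩
      simp only [Function.uncurry]
      rw [norm_mul, norm_mul]
      have h2 : ‖(-1 : ℂ) ^ (n + 1)‖ = 1 := by simp
      rw [h2, one_mul]
      calc ‖F n i j‖ * ‖E j k‖ ≤ (ε * w i j * (1 / 2) ^ n) * ε :=
            mul_le_mul (hFhalf n i j) (hEone j k) (norm_nonneg _) (by positivity)
        _ = (ε * w i j) * (ε * (1 / 2) ^ n) := by ring
    have hcomm := Summable.tsum_comm (f := fun (j : ι) (n : ℕ) =>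
      ((-1 : ℂ) ^ (n + 1) * F n i j) * E j k) hjoint
    have lhs_eq : (∑' j, N i j * E j k)
        = ∑' (j : ι) (n : ℕ), ((-1 : ℂ) ^ (n + 1) * F n i j) * E j k := by
      congr 1; funext j
      rw [hNdef]
      exact (tsum_mul_right).symm
    have inner_eq : ∀ n : ℕ, (∑' j, ((-1 : ℂ) ^ (n + 1) * F n i j) * E j k)
        = (-1 : ℂ) ^ (n + 1) * F (n + 1) i k := by
      intro n
      have : (fun j => ((-1 : ℂ) ^ (n + 1) * F n i j) * E j k)
          = fun j => (-1 : ℂ) ^ (n + 1) * (F n i j * E j k) := by funext j; ring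
      rw [this, tsum_mul_left, (hFr n i k).2]
    rw [lhs_eq, ← hcomm, tsum_congr inner_eq]
    exact (hNshift i k).2
  -- the candidate inverse
  refine ⟨fun i k => (if i = k then 1 else 0) + N i k, ?_, ?_, ?_⟩
  · -- P * M = I
    intro i k
    have hPE : ∀ a b, (inner ℂ (p a) (p b) : ℂ) = (if a = b then 1 else 0) + E a b := by
      intro a b; rw [hEdef]; ring
    set g1 : ι → ℂ := fun j => if j = i then (if i = k then (1:ℂ) else 0) else 0 with hg1
    set g2 : ι → ℂ := fun j => if j = i then N i k else 0 with hg2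
    set g3 : ι → ℂ := fun j => if j = k then E i k else 0 with hg3
    have hs1 : Summable g1 := by
      apply summable_of_ne_finset_zero (s := {i})
      intro b hb; simp only [Finset.mem_singleton] at hb; simp [hg1, hb]
    have hs2 : Summable g2 := by
      apply summable_of_ne_finset_zero (s := {i})
      intro b hb; simp only [Finset.mem_singleton] at hb; simp [hg2, hb]
    have hs3 : Summable g3 := by
      apply summable_of_ne_finset_zero (s := {k})
      intro b hb; simp only [Finset.mem_singleton] at hb; simp [hg3, hb]
    have hs4 : Summable (fun j => E i j * N j k) := (hswap i k).1
    have hfun : (fun j => (inner ℂ (p i) (p j) : ℂ) * ((if j = k then 1 else 0) + N j k))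
        = fun j => g1 j + g2 j + g3 j + E i j * N j k := by
      funext j
      simp only [hg1, hg2, hg3]
      rw [hPE i j]
      by_cases h1 : j = i
      · subst h1
        by_cases h2 : j = k <;> simp [h2] <;> ring
      · have h1' : ¬ i = j := fun h => h1 h.symm
        by_cases h2 : j = k
        · have h3 : ¬ i = k := fun h => h1' (h.trans h2.symm)
          have h4 : ¬ k = i := fun h => h3 h.symm
          simp [h1, h1', h2, h3, h4]
          try ring
        · simp [h1, h1', h2]
    constructor
    · rw [hfun]; exact ((hs1.add hs2).add hs3).add hs4
    · rw [hfun, Summable.tsum_add ((hs1.add hs2).add hs3) hs4, Summable.tsum_add (hs1.add hs2) hs3,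
        Summable.tsum_add hs1 hs2, (hswap i k).2]
      have e1 : ∑' j, g1 j = (if i = k then (1:ℂ) else 0) := tsum_ite_eq i _
      have e2 : ∑' j, g2 j = N i k := tsum_ite_eq i _
      have e3 : ∑' j, g3 j = E i k := tsum_ite_eq k _
      rw [e1, e2, e3]; ring
  · -- M * P = I
    intro i k
    have hPE : ∀ a b, (inner ℂ (p a) (p b) : ℂ) = (if a = b then 1 else 0) + E a b := by
      intro a b; rw [hEdef]; ring
    set g1 : ι → ℂ := fun j => if j = i then (if i = k then (1:ℂ) else 0) else 0 with hg1
    set g2 : ι → ℂ := fun j => if j = i then E i k else 0 with hg2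
    set g3 : ι → ℂ := fun j => if j = k then N i k else 0 with hg3
    have hs1 : Summable g1 := by
      apply summable_of_ne_finset_zero (s := {i})
      intro b hb; simp only [Finset.mem_singleton] at hb; simp [hg1, hb]
    have hs2 : Summable g2 := by
      apply summable_of_ne_finset_zero (s := {i})
      intro b hb; simp only [Finset.mem_singleton] at hb; simp [hg2, hb]
    have hs3 : Summable g3 := by
      apply summable_of_ne_finset_zero (s := {k})
      intro b hb; simp only [Finset.mem_singleton] at hb; simp [hg3, hb]
    have hs4 : Summable (fun j => N i j * E j k) := (hswap' i k).1
    have hfun : (fun j => ((if i = j then (1:ℂ) else 0) + N i j) * (inner ℂ (p j) (p k) : ℂ))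
        = fun j => g1 j + g2 j + g3 j + N i j * E j k := by
      funext j
      simp only [hg1, hg2, hg3]
      rw [hPE j k]
      by_cases h1 : j = i
      · subst h1
        by_cases h2 : j = k <;> simp [h2] <;> ring
      · have h1' : ¬ i = j := fun h => h1 h.symm
        by_cases h2 : j = k
        · have h3 : ¬ i = k := fun h => h1' (h.trans h2.symm)
          have h4 : ¬ k = i := fun h => h3 h.symm
          simp [h1, h1', h2, h3, h4]
          try ring
        · simp [h1, h1', h2]
    constructor
    · rw [hfun]; exact ((hs1.add hs2).add hs3).add hs4
    · rw [hfun, Summable.tsum_add ((hs1.add hs2).add hs3) hs4, Summable.tsum_add (hs1.add hs2) hs3,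
        Summable.tsum_add hs1 hs2, (hswap' i k).2]
      have e1 : ∑' j, g1 j = (if i = k then (1:ℂ) else 0) := tsum_ite_eq i _
      have e2 : ∑' j, g2 j = E i k := tsum_ite_eq i _
      have e3 : ∑' j, g3 j = N i k := tsum_ite_eq k _
      rw [e1, e2, e3]; ring
  · -- the bound
    intro i j
    have : (if i = j then (1:ℂ) else 0) + N i j - (if i = j then 1 else 0) = N i j := by ring
    rw [this]
    have := hNbd i j
    calc ‖N i j‖ ≤ 2 * ε * w i j := hNbd i j
      _ = 2 * ε * Real.exp (-(c/2) * dist (emb i) (emb j)) := by rw [hwdef]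
end
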